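/- For every real μ ≥ 27 and every real λ with 0 < λ ≤ μ, there exists a binomially distributed random variable Z with E[Z] = μ such that Pr[ Z ≥ E[Z] + λ ] ≥ exp( −100 − λ²/E[Z] ). -/

import Mathlib

open MeasureTheory ProbabilityTheory Finset


lemma my_self_le_sinh {t : ℝ} (ht : 0 ≤ t) : t ≤ Real.sinh t := by
  have hmono : MonotoneOn (fun y => Real.sinh y - y) (Set.Ici (0:ℝ)) := by
    apply monotoneOn_of_deriv_nonneg (convex_Ici 0)
    · exact (Real.continuous_sinh.sub continuous_id).continuousOn
    · intro x _
      exact ((Real.hasDerivAt_sinh x).sub (hasDerivAt_id x)).differentiableAt.differentiableWithinAt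
    · intro x _
      have hd : HasDerivAt (fun y => Real.sinh y - y) (Real.cosh x - 1) x :=
        (Real.hasDerivAt_sinh x).sub (hasDerivAt_id x)
      rw [hd.deriv]
      simp [Real.one_le_cosh]
  have h2 := hmono (Set.self_mem_Ici) ht ht
  simp only [Real.sinh_zero, sub_zero, sub_self] at h2
  linarith [h2]

lemma two_log_le {u : ℝ} (hu : 1 ≤ u) : 2 * Real.log u ≤ u - u⁻¹ := by
  have hu0 : 0 < u := lt_of_lt_of_le one_pos hu
  have ht : 0 ≤ Real.log u := Real.log_nonneg hu
  have := my_self_le_sinh ht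
  rw [Real.sinh_eq, Real.exp_log hu0, Real.exp_neg, Real.exp_log hu0] at this
  linarith

lemma kl_upper {m x : ℝ} (hm : 0 < m) (hx : m ≤ x) :
    x * Real.log (x / m) ≤ (x - m) + (x - m)^2 / (2*m) := by
  have hu : 1 ≤ x / m := (one_le_div hm).2 hx
  have hx0 : 0 < x := lt_of_lt_of_le hm hx
  have h2 := two_log_le hu
  have hinv : (x / m)⁻¹ = m / x := by
    rw [inv_div]
  rw [hinv] at h2
  have hlog : x * Real.log (x/m) ≤ x * ((x/m - m/x)/2) :=
    mul_le_mul_of_nonneg_left (by linarith) (le_of_lt hx0)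
  have he : x * ((x/m - m/x)/2) = (x^2 - m^2)/(2*m) := by field_simp
  have hfin : (x^2 - m^2)/(2*m) ≤ (x - m) + (x-m)^2/(2*m) := by
    rw [div_le_iff₀ (by positivity), add_mul, div_mul_cancel₀ _ (by positivity : (2*m) ≠ 0)]
    nlinarith
  linarith [he ▸ hlog]


lemma stirling_lb (l : ℕ) : Real.sqrt Real.pi ≤ Stirling.stirlingSeq (l+1) := by
  have h := Stirling.stirlingSeq'_antitone
  have ht : Filter.Tendsto (Stirling.stirlingSeq ∘ Nat.succ) Filter.atTop (nhds (Real.sqrt Real.pi)) :=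
    Stirling.tendsto_stirlingSeq_sqrt_pi.comp (Filter.tendsto_add_atTop_nat 1)
  exact h.le_of_tendsto ht l

lemma stirling_ub (l : ℕ) : Stirling.stirlingSeq (l+1) ≤ Real.exp 1 / Real.sqrt 2 := by
  have h := Stirling.stirlingSeq'_antitone (Nat.zero_le l)
  simpa [Stirling.stirlingSeq_one] using h

lemma factorial_ge (l : ℕ) :
    Real.sqrt Real.pi * (Real.sqrt (2*(l+1)) * (((l:ℝ)+1)/Real.exp 1)^(l+1)) ≤ (l+1).factorial := by
  have h := stirling_lb l
  rw [Stirling.stirlingSeq] at h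
  have hpos : 0 < Real.sqrt (2*((l:ℝ)+1)) * (((l:ℝ)+1)/Real.exp 1)^(l+1) := by positivity
  push_cast at h
  rw [le_div_iff₀ hpos] at h
  push_cast
  linarith [h]

lemma factorial_le (l : ℕ) :
    ((l+1).factorial : ℝ) ≤ (Real.exp 1 / Real.sqrt 2) * (Real.sqrt (2*((l:ℝ)+1)) * (((l:ℝ)+1)/Real.exp 1)^(l+1)) := by
  have h := stirling_ub l
  rw [Stirling.stirlingSeq] at h
  have hpos : 0 < Real.sqrt (2*((l:ℝ)+1)) * (((l:ℝ)+1)/Real.exp 1)^(l+1) := by positivity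
  push_cast at h
  rw [div_le_iff₀ hpos] at h
  push_cast
  linarith [h]


lemma fact_lb {l : ℕ} (h : 1 ≤ l) :
    Real.sqrt Real.pi * (Real.sqrt (2*(l:ℝ)) * ((l:ℝ)/Real.exp 1)^l) ≤ l.factorial := by
  cases l with
  | zero => omega
  | succ k =>
    have := factorial_ge k
    push_cast at this ⊢
    exact this

lemma fact_ub {l : ℕ} (h : 1 ≤ l) :
    (l.factorial : ℝ) ≤ (Real.exp 1 / Real.sqrt 2) * (Real.sqrt (2*(l:ℝ)) * ((l:ℝ)/Real.exp 1)^l) := by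
  cases l with
  | zero => omega
  | succ k =>
    have := factorial_le k
    push_cast at this ⊢
    exact this



lemma choose_eq_div {j d : ℕ} :
    (((j+d).choose j : ℕ) : ℝ) = ((j+d).factorial : ℝ) / ((j.factorial : ℝ) * (d.factorial : ℝ)) := by
  have h := Nat.choose_mul_factorial_mul_factorial (Nat.le_add_right j d)
  have : ((j+d).choose j * j.factorial * (j + d - j).factorial : ℕ) = (j+d).factorial := h
  rw [Nat.add_sub_cancel_left] at this
  have hcast : (((j+d).choose j : ℕ):ℝ) * (j.factorial:ℝ) * (d.factorial:ℝ) = ((j+d).factorial : ℝ) := by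
    exact_mod_cast congrArg (Nat.cast : ℕ → ℝ) this
  field_simp
  linarith [hcast]

lemma choose_lb {j d : ℕ} (hj : 1 ≤ j) (hd : 1 ≤ d) :
    (Real.sqrt Real.pi * 2 / Real.exp 1 ^ 2) * (Real.sqrt (2*((j:ℝ)+d)) / (Real.sqrt (2*j) * Real.sqrt (2*d)))
      * (((j:ℝ)+d)^(j+d) / ((j:ℝ)^j * (d:ℝ)^d)) ≤ ((j+d).choose j : ℝ) := by
  have hjd : 1 ≤ j + d := le_trans hj (Nat.le_add_right j d)
  have h1 := fact_lb hjd
  have h2 := fact_ub hj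
  have h3 := fact_ub hd
  rw [choose_eq_div]
  have hjp : (0:ℝ) < j := by exact_mod_cast hj
  have hdp : (0:ℝ) < d := by exact_mod_cast hd
  have hjf : (0:ℝ) < j.factorial := by exact_mod_cast Nat.factorial_pos j
  have hdf : (0:ℝ) < d.factorial := by exact_mod_cast Nat.factorial_pos d
  have e0 : (0:ℝ) < Real.exp 1 := Real.exp_pos 1
  -- lower bound the quotient
  have key : Real.sqrt Real.pi * (Real.sqrt (2*((j:ℝ)+d)) * (((j:ℝ)+d)/Real.exp 1)^(j+d))
      / ((Real.exp 1 / Real.sqrt 2) * (Real.sqrt (2*(j:ℝ)) * ((j:ℝ)/Real.exp 1)^j)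
        * ((Real.exp 1 / Real.sqrt 2) * (Real.sqrt (2*(d:ℝ)) * ((d:ℝ)/Real.exp 1)^d)))
      ≤ ((j+d).factorial : ℝ) / ((j.factorial : ℝ) * (d.factorial : ℝ)) := by
    apply div_le_div₀ (by positivity) _ (by positivity) (by nlinarith [mul_le_mul h2 h3 (le_of_lt hdf) (by positivity : (0:ℝ) ≤ (Real.exp 1 / Real.sqrt 2) * (Real.sqrt (2*(j:ℝ)) * ((j:ℝ)/Real.exp 1)^j))])
    calc Real.sqrt Real.pi * (Real.sqrt (2*((j:ℝ)+d)) * (((j:ℝ)+d)/Real.exp 1)^(j+d))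
        = Real.sqrt Real.pi * (Real.sqrt (2*(((j+d):ℕ):ℝ)) * ((((j+d):ℕ):ℝ)/Real.exp 1)^(j+d)) := by push_cast; ring
      _ ≤ ((j+d).factorial : ℝ) := fact_lb hjd
  refine le_trans (le_of_eq ?_) key
  have hs2 : (0:ℝ) < Real.sqrt 2 := by positivity
  have hsq2 : Real.sqrt 2 * Real.sqrt 2 = 2 := Real.mul_self_sqrt (by norm_num)
  have hpow : (((j:ℝ)+d)/Real.exp 1)^(j+d) = ((j:ℝ)+d)^(j+d) / Real.exp 1 ^(j+d) := div_pow _ _ _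
  have hpj : ((j:ℝ)/Real.exp 1)^j = (j:ℝ)^j / Real.exp 1 ^ j := div_pow _ _ _
  have hpd : ((d:ℝ)/Real.exp 1)^d = (d:ℝ)^d / Real.exp 1 ^ d := div_pow _ _ _
  rw [hpow, hpj, hpd, pow_add]
  have he2 : Real.exp 2 = Real.exp 1 * Real.exp 1 := by
    rw [← Real.exp_add]; norm_num
  have h5 : Real.sqrt 2 ^ 5 = Real.sqrt 2 ^ 3 * 2 := by
    rw [show (5:ℕ)=3+2 from rfl, pow_add, sq, hsq2]
  field_simp
  rw [pow_add, Real.sq_sqrt (by norm_num : (0:ℝ) ≤ 2)]; ring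

lemma pow_ratio_lb1 {mu : ℝ} (hmu : 0 < mu) {j : ℕ} (hj : mu ≤ (j:ℝ)) :
    Real.exp (-(((j:ℝ)-mu) + ((j:ℝ)-mu)^2/(2*mu))) ≤ (mu/(j:ℝ))^j := by
  have hx : (0:ℝ) < j := lt_of_lt_of_le hmu hj
  have hpos : (0:ℝ) < (mu/(j:ℝ))^j := by positivity
  have heq : (mu/(j:ℝ))^j = Real.exp ((j:ℝ) * Real.log (mu/(j:ℝ))) := by
    rw [← Real.log_pow, Real.exp_log hpos]
  rw [heq]
  apply Real.exp_le_exp.2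
  have hinv : mu/(j:ℝ) = ((j:ℝ)/mu)⁻¹ := by rw [inv_div]
  rw [hinv, Real.log_inv]
  have := kl_upper hmu hj
  nlinarith [this]

lemma pow_ratio_lb2 {nu a : ℝ} {d : ℕ} (hd : 1 ≤ d) (ha : 0 ≤ a) (hda : (d:ℝ) = nu - a) :
    Real.exp (a - a^2/nu) ≤ (nu/(d:ℝ))^d := by
  have hdp : (0:ℝ) < d := by exact_mod_cast hd
  have hnu : 0 < nu := by linarith [hda, hdp]
  have hpos : (0:ℝ) < (nu/(d:ℝ))^d := by positivity
  have heq : (nu/(d:ℝ))^d = Real.exp ((d:ℝ) * Real.log (nu/(d:ℝ))) := by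
    rw [← Real.log_pow, Real.exp_log hpos]
  rw [heq]
  apply Real.exp_le_exp.2
  have hinv : nu/(d:ℝ) = ((d:ℝ)/nu)⁻¹ := by rw [inv_div]
  rw [hinv, Real.log_inv]
  have hlog : Real.log ((d:ℝ)/nu) ≤ (d:ℝ)/nu - 1 :=
    Real.log_le_sub_one_of_pos (by positivity)
  have h1 : (d:ℝ) * Real.log ((d:ℝ)/nu) ≤ (d:ℝ) * ((d:ℝ)/nu - 1) :=
    mul_le_mul_of_nonneg_left hlog (le_of_lt hdp)
  have h2 : (d:ℝ) * ((d:ℝ)/nu - 1) = -a + a^2/nu := by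
    rw [hda]; field_simp; ring
  nlinarith [h1, h2]

lemma term_lb {j d : ℕ} (hj : 1 ≤ j) (hd : 1 ≤ d) {mu : ℝ} (hmu : 0 < mu) (hjm : mu ≤ (j:ℝ)) :
    (Real.sqrt Real.pi * 2 / Real.exp 1 ^ 2) * (Real.sqrt 2 / Real.sqrt ((j:ℝ)+d)) *
      Real.exp (-(((j:ℝ)-mu)^2/(2*mu)) - ((j:ℝ)-mu)^2/(((j:ℝ)+d)-mu)) ≤
    ((j+d).choose j : ℝ) * ((mu/((j:ℝ)+d))^j * ((((j:ℝ)+d)-mu)/((j:ℝ)+d))^d) := by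
  have hjp : (0:ℝ) < j := by exact_mod_cast hj
  have hdp : (0:ℝ) < d := by exact_mod_cast hd
  have hnp : (0:ℝ) < (j:ℝ)+d := by linarith
  set a : ℝ := (j:ℝ) - mu with ha_def
  set nu : ℝ := ((j:ℝ)+d) - mu with hnu_def
  have ha : 0 ≤ a := by rw [ha_def]; linarith
  have hnu : 0 < nu := by rw [hnu_def]; linarith
  have hda : (d:ℝ) = nu - a := by rw [hnu_def, ha_def]; ring
  -- step 1: the product identity
  have hiden : (((j:ℝ)+d)^(j+d) / ((j:ℝ)^j * (d:ℝ)^d)) * ((mu/((j:ℝ)+d))^j * (nu/((j:ℝ)+d))^d)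
      = (mu/(j:ℝ))^j * (nu/(d:ℝ))^d := by
    rw [pow_add, div_pow, div_pow, div_pow, div_pow]
    field_simp
  -- step 2: exp bound on the ratio product
  have hP : Real.exp (-(a^2/(2*mu)) - a^2/nu) ≤ (mu/(j:ℝ))^j * (nu/(d:ℝ))^d := by
    have h1 := pow_ratio_lb1 hmu hjm
    have h2 := pow_ratio_lb2 hd ha hda
    have hE : (-(a^2/(2*mu)) - a^2/nu) = (-(((j:ℝ)-mu) + ((j:ℝ)-mu)^2/(2*mu))) + (a - a^2/nu) := by
      rw [ha_def]; ring
    rw [hE, Real.exp_add]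
    exact mul_le_mul h1 h2 (le_of_lt (Real.exp_pos _)) (by positivity)

  -- step 3: R ≥ √2/√(j+d)
  have hR : Real.sqrt 2 / Real.sqrt ((j:ℝ)+d) ≤
      Real.sqrt (2*((j:ℝ)+d)) / (Real.sqrt (2*(j:ℝ)) * Real.sqrt (2*(d:ℝ))) := by
    have hden : Real.sqrt (2*(j:ℝ)) * Real.sqrt (2*(d:ℝ)) = 2 * Real.sqrt ((j:ℝ)*d) := by
      rw [← Real.sqrt_mul (by positivity)]
      rw [show 2*(j:ℝ)*(2*(d:ℝ)) = 2^2*((j:ℝ)*d) by ring,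
        Real.sqrt_mul (by positivity), Real.sqrt_sq (by norm_num)]
    have hsqjd : Real.sqrt ((j:ℝ)*d) ≤ ((j:ℝ)+d)/2 := by
      rw [show ((j:ℝ)+d)/2 = Real.sqrt ((((j:ℝ)+d)/2)^2) from (Real.sqrt_sq (by positivity)).symm]
      apply Real.sqrt_le_sqrt
      nlinarith [sq_nonneg ((j:ℝ)-d)]
    have hnum : Real.sqrt (2*((j:ℝ)+d)) = Real.sqrt 2 * Real.sqrt ((j:ℝ)+d) :=
      Real.sqrt_mul (by norm_num) _
    rw [hden, hnum]
    rw [div_le_div_iff₀ (by positivity) (by positivity)]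
    have h1 : Real.sqrt 2 * (2 * Real.sqrt ((j:ℝ)*d)) ≤ Real.sqrt 2 * ((j:ℝ)+d) := by
      have := mul_le_mul_of_nonneg_left hsqjd (by positivity : (0:ℝ) ≤ 2 * Real.sqrt 2)
      nlinarith [this]
    have hs : Real.sqrt ((j:ℝ)+d) * Real.sqrt ((j:ℝ)+d) = (j:ℝ)+d := Real.mul_self_sqrt (le_of_lt hnp)
    calc Real.sqrt 2 * (2 * Real.sqrt ((j:ℝ)*d)) ≤ Real.sqrt 2 * ((j:ℝ)+d) := h1
      _ = Real.sqrt 2 * Real.sqrt ((j:ℝ)+d) * Real.sqrt ((j:ℝ)+d) := by rw [mul_assoc, hs]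
  -- assemble
  have hC : (0:ℝ) < Real.sqrt Real.pi * 2 / Real.exp 1 ^ 2 := by positivity
  have hchoose := choose_lb hj hd
  have hQ : (0:ℝ) ≤ (mu/((j:ℝ)+d))^j * (nu/((j:ℝ)+d))^d := by positivity
  -- choose * Q ≥ C * R * big * Q = C * R * (identity)
  have step : (Real.sqrt Real.pi * 2 / Real.exp 1 ^ 2) *
      (Real.sqrt (2*((j:ℝ)+d)) / (Real.sqrt (2*(j:ℝ)) * Real.sqrt (2*(d:ℝ)))) *
      ((mu/(j:ℝ))^j * (nu/(d:ℝ))^d) ≤ ((j+d).choose j : ℝ) * ((mu/((j:ℝ)+d))^j * (nu/((j:ℝ)+d))^d) := by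
    rw [← hiden]
    calc (Real.sqrt Real.pi * 2 / Real.exp 1 ^ 2) *
        (Real.sqrt (2*((j:ℝ)+d)) / (Real.sqrt (2*(j:ℝ)) * Real.sqrt (2*(d:ℝ)))) *
        ((((j:ℝ)+d)^(j+d) / ((j:ℝ)^j * (d:ℝ)^d)) * ((mu/((j:ℝ)+d))^j * (nu/((j:ℝ)+d))^d))
        = ((Real.sqrt Real.pi * 2 / Real.exp 1 ^ 2) *
          (Real.sqrt (2*((j:ℝ)+d)) / (Real.sqrt (2*(j:ℝ)) * Real.sqrt (2*(d:ℝ))))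
          * (((j:ℝ)+d)^(j+d) / ((j:ℝ)^j * (d:ℝ)^d))) * ((mu/((j:ℝ)+d))^j * (nu/((j:ℝ)+d))^d) := by ring
      _ ≤ ((j+d).choose j : ℝ) * ((mu/((j:ℝ)+d))^j * (nu/((j:ℝ)+d))^d) :=
          mul_le_mul_of_nonneg_right hchoose hQ
  refine le_trans ?_ step
  have hRexp : (Real.sqrt 2 / Real.sqrt ((j:ℝ)+d)) * Real.exp (-(a^2/(2*mu)) - a^2/nu) ≤
      (Real.sqrt (2*((j:ℝ)+d)) / (Real.sqrt (2*(j:ℝ)) * Real.sqrt (2*(d:ℝ)))) * ((mu/(j:ℝ))^j * (nu/(d:ℝ))^d) :=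
    mul_le_mul hR hP (le_of_lt (Real.exp_pos _)) (by positivity)
  calc (Real.sqrt Real.pi * 2 / Real.exp 1 ^ 2) * (Real.sqrt 2 / Real.sqrt ((j:ℝ)+d)) *
        Real.exp (-(a^2/(2*mu)) - a^2/nu)
      = (Real.sqrt Real.pi * 2 / Real.exp 1 ^ 2) * ((Real.sqrt 2 / Real.sqrt ((j:ℝ)+d)) *
        Real.exp (-(a^2/(2*mu)) - a^2/nu)) := by ring
    _ ≤ (Real.sqrt Real.pi * 2 / Real.exp 1 ^ 2) * ((Real.sqrt (2*((j:ℝ)+d)) / (Real.sqrt (2*(j:ℝ)) * Real.sqrt (2*(d:ℝ)))) * ((mu/(j:ℝ))^j * (nu/(d:ℝ))^d)) :=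
        mul_le_mul_of_nonneg_left hRexp (le_of_lt hC)
    _ = (Real.sqrt Real.pi * 2 / Real.exp 1 ^ 2) *
        (Real.sqrt (2*((j:ℝ)+d)) / (Real.sqrt (2*(j:ℝ)) * Real.sqrt (2*(d:ℝ)))) * ((mu/(j:ℝ))^j * (nu/(d:ℝ))^d) := by ring


lemma exponent_bound {μ lam s a nu : ℝ} (hlam0 : 0 < lam) (e2 : lam ≤ μ)
    (hs2 : s^2 = μ) (hs5 : 5 ≤ s) (ha0 : 0 < a) (ha_ub : a ≤ lam+s+1) (hnu : 3*μ ≤ nu) :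
    -100 - lam^2/μ ≤ -2 + (-(a^2/(2*μ)) - a^2/nu) := by
  have hμ0 : (0:ℝ) < μ := by nlinarith
  have h1 : a^2/nu ≤ a^2/(3*μ) := by
    apply div_le_div_of_nonneg_left (by positivity) (by linarith) hnu
  have e1 : a^2 ≤ (lam+s+1)^2 := pow_le_pow_left₀ (le_of_lt ha0) ha_ub 2
  have e2' : lam ≤ s^2 := by rw [hs2]; exact e2
  have e3 : 0 ≤ lam^2 - 10*lam*s + 25*s^2 := by nlinarith [sq_nonneg (lam-5*s)]
  have e4 : (0:ℝ) ≤ 548*s^2 - 10*s - 5 := by nlinarith [hs5]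
  have q : 5*(lam+s+1)^2 ≤ 6*lam^2 + 588*s^2 := by nlinarith [e3, e2', e4]
  have h5a : 5*a^2 ≤ 6*lam^2 + 588*μ := by rw [← hs2]; linarith
  have heq : a^2/(2*μ) + a^2/(3*μ) = (5*a^2)/(6*μ) := by field_simp; ring
  have h2 : (5*a^2)/(6*μ) ≤ 98 + lam^2/μ := by
    rw [div_le_iff₀ (by positivity)]
    have hexpand : (98 + lam^2/μ) * (6*μ) = 588*μ + 6*lam^2 := by field_simp; ring
    rw [hexpand]; linarith
  have h6 : a^2/(2*μ) + a^2/(3*μ) ≤ 98 + lam^2/μ := by rw [heq]; exact h2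
  linarith [h1, h6]

lemma const_bound : (0.675:ℝ) ≤ (Real.sqrt Real.pi * 2 / Real.exp 1 ^ 2) * Real.sqrt 2 := by
  have hpi : (1.77:ℝ) ≤ Real.sqrt Real.pi := by
    rw [show (1.77:ℝ) = Real.sqrt (1.77^2) by rw [Real.sqrt_sq]; norm_num]
    exact Real.sqrt_le_sqrt (by nlinarith [Real.pi_gt_d6])
  have hsq2 : (1.41:ℝ) ≤ Real.sqrt 2 := by
    rw [show (1.41:ℝ) = Real.sqrt (1.41^2) by rw [Real.sqrt_sq]; norm_num]
    exact Real.sqrt_le_sqrt (by norm_num)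
  have he1 : Real.exp 1 ≤ 2.7182818286 := le_of_lt Real.exp_one_lt_d9
  have he2 : Real.exp 1 ^ 2 ≤ 7.39 := by nlinarith [Real.exp_pos 1]
  have he2' : (0:ℝ) < Real.exp 1 ^ 2 := by positivity
  rw [div_mul_eq_mul_div, le_div_iff₀ he2']
  nlinarith [Real.sqrt_nonneg Real.pi, Real.sqrt_nonneg 2]

lemma exp_neg_two_bound : Real.exp (-2) ≤ 0.14 := by
  have he1' : 2.7182818283 ≤ Real.exp 1 := le_of_lt Real.exp_one_gt_d9
  have hid : Real.exp (-2) * (Real.exp 1 * Real.exp 1) = 1 := by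
    rw [← Real.exp_add, ← Real.exp_add]; norm_num
  nlinarith [Real.exp_pos (-2)]


lemma per_term {μ lam : ℝ} (hμ : 27 ≤ μ) (hlam0 : 0 < lam) (hlamμ : lam ≤ μ)
    {n j m : ℕ} (hn_lb : 4*μ ≤ (n:ℝ)) (hn_ub : (n:ℝ) ≤ 4*μ+4)
    (hm_lb : Real.sqrt μ ≤ (m:ℝ)) (hm_ub : (m:ℝ) ≤ Real.sqrt μ + 1)
    (hj_lb : μ + lam ≤ (j:ℝ)) (hj_ub : (j:ℝ) ≤ μ + lam + Real.sqrt μ + 1) :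
    Real.exp (-100 - lam^2/μ) / m ≤ (n.choose j : ℝ) * ((μ/n)^j * (1 - μ/n)^(n-j)) := by
  have hμ0 : (0:ℝ) < μ := by linarith
  set s := Real.sqrt μ with hs_def
  have hs2 : s^2 = μ := Real.sq_sqrt (le_of_lt hμ0)
  have hs5 : 5 ≤ s := by
    rw [hs_def, show (5:ℝ) = Real.sqrt 25 by rw [show (25:ℝ) = 5^2 by norm_num, Real.sqrt_sq]; norm_num]
    exact Real.sqrt_le_sqrt (by linarith)
  have hso : 0 < s := by linarith
  have hj1 : 1 ≤ j := by
    have : (1:ℝ) ≤ j := by linarith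
    exact_mod_cast this
  have hjn : j < n := by
    have h1 : (j:ℝ) < n := by nlinarith [hs2, hs5, hj_ub, hn_lb, hlamμ]
    exact_mod_cast h1
  have hd1 : 1 ≤ n - j := by omega
  have hjd : j + (n - j) = n := by omega
  have hdcast : ((n - j : ℕ):ℝ) = (n:ℝ) - j := by
    push_cast [Nat.cast_sub (le_of_lt hjn)]; ring
  have hjm : μ ≤ (j:ℝ) := by linarith
  have key := term_lb hj1 hd1 hμ0 hjm
  rw [hjd, hdcast] at key
  have hn0 : (0:ℝ) < n := by linarith
  have hsum : (j:ℝ) + ((n:ℝ) - j) = (n:ℝ) := by ring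
  rw [hsum] at key
  have hfrac : ((n:ℝ) - μ)/(n:ℝ) = 1 - μ/n := by field_simp
  rw [hfrac] at key
  refine le_trans ?_ key
  clear key hfrac hsum hdcast hjd hd1 hjm
  set a := (j:ℝ) - μ with ha_def
  have ha_lb : lam ≤ a := by rw [ha_def]; linarith
  have ha_ub : a ≤ lam + s + 1 := by rw [ha_def]; linarith
  have ha0 : 0 < a := by linarith
  have hnu : 3*μ ≤ (n:ℝ) - μ := by linarith
  have hexp := exponent_bound hlam0 hlamμ hs2 hs5 ha0 ha_ub hnu
  have hE := Real.exp_le_exp.2 hexp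
  rw [Real.exp_add] at hE
  have hsqn : Real.sqrt n ≤ 2.04 * s := by
    rw [show (2.04:ℝ)*s = Real.sqrt ((2.04*s)^2) by rw [Real.sqrt_sq]; positivity]
    apply Real.sqrt_le_sqrt
    nlinarith [hn_ub, hs2, hs5]
  have hsqn0 : 0 < Real.sqrt n := Real.sqrt_pos.2 hn0
  have hm0 : (0:ℝ) < m := by linarith
  have hEpos : 0 < Real.exp (-(a^2/(2*μ)) - a^2/((n:ℝ)-μ)) := Real.exp_pos _
  have hfinal : Real.exp (-2) / m ≤ (Real.sqrt Real.pi * 2 / Real.exp 1 ^ 2) * (Real.sqrt 2 / Real.sqrt n) := by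
    have h1 : Real.exp (-2)/m ≤ 0.14/s :=
      div_le_div₀ (by norm_num) exp_neg_two_bound hso hm_lb
    have h2 : (0.675:ℝ)/(2.04*s) ≤ ((Real.sqrt Real.pi * 2 / Real.exp 1 ^ 2) * Real.sqrt 2)/(Real.sqrt n) := by
      apply div_le_div₀ _ const_bound hsqn0 hsqn
      positivity
    have h3 : (0.14:ℝ)/s ≤ 0.675/(2.04*s) := by
      rw [div_le_div_iff₀ hso (by positivity)]
      nlinarith [hso]
    have h4 : ((Real.sqrt Real.pi * 2 / Real.exp 1 ^ 2) * Real.sqrt 2)/(Real.sqrt n)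
        = (Real.sqrt Real.pi * 2 / Real.exp 1 ^ 2) * (Real.sqrt 2 / Real.sqrt n) := by ring
    rw [h4] at h2
    linarith [h1, h2, h3]
  calc Real.exp (-100 - lam^2/μ) / m
      ≤ (Real.exp (-2) * Real.exp (-(a^2/(2*μ)) - a^2/((n:ℝ)-μ))) / m := by
        gcongr
    _ = (Real.exp (-2)/m) * Real.exp (-(a^2/(2*μ)) - a^2/((n:ℝ)-μ)) := by ring
    _ ≤ ((Real.sqrt Real.pi * 2 / Real.exp 1 ^ 2) * (Real.sqrt 2 / Real.sqrt n)) * Real.exp (-(a^2/(2*μ)) - a^2/((n:ℝ)-μ)) :=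
        mul_le_mul_of_nonneg_right hfinal (le_of_lt hEpos)


section B
variable {n : ℕ} (q : ENNReal) (hq : q ≤ 1)

noncomputable def muB : Measure Bool := (PMF.bernoulli q.toNNReal (by have h := ENNReal.toNNReal_mono ENNReal.one_ne_top hq; rwa [ENNReal.toNNReal_one] at h)).toMeasure

noncomputable def PP (n : ℕ) : Measure (Fin n → Bool) := Measure.pi (fun _ => muB q hq)

instance : IsProbabilityMeasure (muB q hq) := PMF.toMeasure.isProbabilityMeasure _

instance : IsProbabilityMeasure (PP q hq n) := by
  unfold PP; infer_instance

lemma muB_true : muB q hq {true} = q := by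
  rw [muB, PMF.toMeasure_apply_singleton _ _ (measurableSet_singleton _), PMF.bernoulli_apply]
  simp [ENNReal.coe_toNNReal (ne_top_of_le_ne_top ENNReal.one_ne_top hq)]

lemma muB_false : muB q hq {false} = 1 - q := by
  rw [muB, PMF.toMeasure_apply_singleton _ _ (measurableSet_singleton _), PMF.bernoulli_apply]
  simp [ENNReal.coe_sub, ENNReal.coe_toNNReal (ne_top_of_le_ne_top ENNReal.one_ne_top hq)]

lemma PP_pi (t : Fin n → Set Bool) : PP q hq n (Set.univ.pi t) = ∏ i, muB q hq (t i) :=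
  Measure.pi_pi _ t

-- intersections of coordinate preimages
lemma inter_eq (S : Finset (Fin n)) (sets : Fin n → Set Bool) :
    (⋂ i ∈ S, (fun ω : Fin n → Bool => ω i) ⁻¹' sets i)
      = Set.univ.pi (fun i => if i ∈ S then sets i else Set.univ) := by
  ext ω
  simp only [Set.mem_iInter, Set.mem_preimage, Set.mem_pi, Set.mem_univ, true_implies]
  constructor
  · intro h i
    by_cases hi : i ∈ S <;> simp [hi, h]
  · intro h i hi
    have := h i
    simpa [hi] using this

lemma PP_inter (S : Finset (Fin n)) (sets : Fin n → Set Bool) :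
    PP q hq n (⋂ i ∈ S, (fun ω : Fin n → Bool => ω i) ⁻¹' sets i) = ∏ i ∈ S, muB q hq (sets i) := by
  rw [inter_eq, PP_pi]
  rw [show (fun i => muB q hq (if i ∈ S then sets i else Set.univ))
      = (fun i => if i ∈ S then muB q hq (sets i) else 1) from ?_]
  · rw [Finset.prod_ite_mem, Finset.univ_inter]
  · funext i
    by_cases hi : i ∈ S
    · simp [hi]
    · simp only [if_neg hi]
      exact measure_univ

lemma PP_eval (i : Fin n) (s : Set Bool) :
    PP q hq n ((fun ω : Fin n → Bool => ω i) ⁻¹' s) = muB q hq s := by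
  have h := PP_inter q hq {i} (fun _ => s)
  simpa using h

lemma PP_indep : iIndepFun
    (fun i (ω : Fin n → Bool) => ω i) (PP q hq n) := by
  rw [iIndepFun_iff_measure_inter_preimage_eq_mul]
  intro S sets _
  rw [PP_inter]
  exact Finset.prod_congr rfl fun i _ => (PP_eval q hq i (sets i)).symm

def FS {n : ℕ} (S : Finset (Fin n)) : Fin n → Bool := fun i => decide (i ∈ S)

lemma FS_inj {n : ℕ} : Function.Injective (@FS n) := by
  intro S T h
  ext i
  have := congrFun h i
  simpa [FS, decide_eq_decide] using this

lemma PP_singleton (f : Fin n → Bool) :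
    PP q hq n {f} = ∏ i, muB q hq {f i} := by
  rw [← Set.univ_pi_singleton f, PP_pi]

lemma PP_FS (S : Finset (Fin n)) :
    PP q hq n {FS S} = q ^ S.card * (1-q) ^ (n - S.card) := by
  rw [PP_singleton]
  have hcongr : ∀ i, muB q hq {FS S i} = if i ∈ S then q else (1-q) := by
    intro i
    by_cases hi : i ∈ S
    · have hb : FS S i = true := by simp [FS, hi]
      rw [hb, if_pos hi]
      exact muB_true q hq
    · have hb : FS S i = false := by simp [FS, hi]
      rw [hb, if_neg hi]
      exact muB_false q hq
  rw [Finset.prod_congr rfl (fun i _ => hcongr i), Finset.prod_ite]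
  rw [Finset.prod_const, Finset.prod_const]
  have h1 : Finset.filter (fun i => i ∈ S) Finset.univ = S := by
    ext i; simp
  have h2 : Finset.filter (fun i => ¬ i ∈ S) Finset.univ = Sᶜ := by
    ext i; simp
  rw [h1, h2, Finset.card_compl, Fintype.card_fin]

lemma singleton_meas (f : Fin n → Bool) : MeasurableSet {f} := by
  rw [← Set.univ_pi_singleton f]
  exact MeasurableSet.univ_pi (fun i => measurableSet_singleton _)

lemma PP_tail (k m : ℕ) (E : Set (Fin n → Bool))
    (hE : ∀ S : Finset (Fin n), S.card ∈ Finset.Ico k (k+m) → (FS S) ∈ E) :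
    ∑ j ∈ Finset.Ico k (k+m), (n.choose j : ENNReal) * (q^j * (1-q)^(n-j)) ≤ PP q hq n E := by
  classical
  set 𝒮 : Finset (Finset (Fin n)) := (Finset.Ico k (k+m)).biUnion (fun j => Finset.univ.powersetCard j) with h𝒮
  have hmem : ∀ S ∈ 𝒮, S.card ∈ Finset.Ico k (k+m) := by
    intro S hS
    rw [h𝒮, Finset.mem_biUnion] at hS
    obtain ⟨j, hj, hSj⟩ := hS
    rw [Finset.mem_powersetCard] at hSj
    rw [hSj.2]; exact hj
  have hsub : (⋃ S ∈ 𝒮, {FS S}) ⊆ E := by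
    intro ω hω
    simp only [Set.mem_iUnion, Set.mem_singleton_iff] at hω
    obtain ⟨S, hS, rfl⟩ := hω
    exact hE S (hmem S hS)
  refine le_trans ?_ (measure_mono hsub)
  have hunion : PP q hq n (⋃ S ∈ 𝒮, {FS S}) = ∑ S ∈ 𝒮, PP q hq n {FS S} := by
    apply measure_biUnion_finset
    · intro x _ y _ hxy
      simp only [Function.onFun, Set.disjoint_singleton_left, Set.mem_singleton_iff]
      exact fun h => hxy (FS_inj h)
    · exact fun S _ => singleton_meas (FS S)
  rw [hunion]
  have hdisj : (↑(Finset.Ico k (k+m)) : Set ℕ).PairwiseDisjoint (fun j => (Finset.univ : Finset (Fin n)).powersetCard j) := by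
    intro x _ y _ hxy
    simp only [Function.onFun]
    rw [Finset.disjoint_left]
    intro S hSx hSy
    exact hxy ((Finset.mem_powersetCard.1 hSx).2.symm.trans (Finset.mem_powersetCard.1 hSy).2)
  rw [h𝒮, Finset.sum_biUnion hdisj]
  apply le_of_eq
  apply Finset.sum_congr rfl
  intro j hj
  have hin : ∀ S ∈ (Finset.univ : Finset (Fin n)).powersetCard j,
      PP q hq n {FS S} = q^j * (1-q)^(n-j) := by
    intro S hS
    rw [PP_FS, (Finset.mem_powersetCard.1 hS).2]
  rw [Finset.sum_congr rfl hin, Finset.sum_const, Finset.card_powersetCard, Finset.card_univ,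
    Fintype.card_fin, nsmul_eq_mul]

end B


theorem binomial_tail_lower_bound (μ : ℝ) (hμ : 27 ≤ μ) (lam : ℝ) (hlam0 : 0 < lam)
    (hlamμ : lam ≤ μ) :
    ∃ (n : ℕ) (p : ℝ) (Ω : Type) (_ : MeasurableSpace Ω) (P : Measure Ω)
      (X : Fin n → Ω → ℝ),
      IsProbabilityMeasure P ∧
      0 ≤ p ∧ p ≤ 1 ∧
      (∀ i, Measurable (X i)) ∧
      iIndepFun X P ∧
      (∀ i ω, X i ω = 0 ∨ X i ω = 1) ∧
      (∀ i, (P {ω | X i ω = 1}).toReal = p) ∧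
      (n : ℝ) * p = μ ∧
      Real.exp (-100 - lam ^ 2 / μ) ≤ (P {ω | μ + lam ≤ ∑ i, X i ω}).toReal := by
  classical
  have hμ0 : (0:ℝ) < μ := by linarith
  set N : ℕ := ⌈μ⌉₊ with hN_def
  set n : ℕ := 4 * N with hn_def
  have hNμ : μ ≤ (N:ℝ) := Nat.le_ceil μ
  have hNμ' : (N:ℝ) ≤ μ + 1 := le_of_lt (Nat.ceil_lt_add_one (le_of_lt hμ0))
  have hn_lb : 4*μ ≤ (n:ℝ) := by
    rw [hn_def]; push_cast; linarith
  have hn_ub : (n:ℝ) ≤ 4*μ + 4 := by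
    rw [hn_def]; push_cast; linarith
  have hn0 : (0:ℝ) < n := by linarith
  have hnne : (n:ℝ) ≠ 0 := ne_of_gt hn0
  set rp : ℝ := μ / n with hrp_def
  have hp0 : 0 ≤ rp := by rw [hrp_def]; positivity
  have hp1 : rp ≤ 1 := by
    rw [hrp_def, div_le_one hn0]; linarith
  set q : ENNReal := ENNReal.ofReal rp with hq_def
  have hq : q ≤ 1 := by
    rw [hq_def, ← ENNReal.ofReal_one]
    exact ENNReal.ofReal_le_ofReal hp1
  set k : ℕ := ⌈μ + lam⌉₊ with hk_def
  set m : ℕ := ⌈Real.sqrt μ⌉₊ with hm_def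
  have hk_lb : μ + lam ≤ (k:ℝ) := Nat.le_ceil _
  have hk_ub : (k:ℝ) ≤ μ + lam + 1 := le_of_lt (Nat.ceil_lt_add_one (by linarith))
  have hm_lb : Real.sqrt μ ≤ (m:ℝ) := Nat.le_ceil _
  have hm_ub : (m:ℝ) ≤ Real.sqrt μ + 1 := le_of_lt (Nat.ceil_lt_add_one (Real.sqrt_nonneg μ))
  have hs5 : (5:ℝ) ≤ Real.sqrt μ := by
    rw [show (5:ℝ) = Real.sqrt 25 by
      rw [show (25:ℝ) = 5^2 by norm_num, Real.sqrt_sq]; norm_num]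
    exact Real.sqrt_le_sqrt (by linarith)
  have hm0 : (0:ℝ) < m := by linarith
  have hmne : (m:ℝ) ≠ 0 := ne_of_gt hm0
  -- the random variables
  set g : Bool → ℝ := fun b => if b then 1 else 0 with hg_def
  set X : Fin n → (Fin n → Bool) → ℝ := fun i ω => g (ω i) with hX_def
  refine ⟨n, rp, (Fin n → Bool), inferInstance, PP q hq n, X, inferInstance, hp0, hp1,
    ?_, ?_, ?_, ?_, ?_, ?_⟩
  · intro i
    exact Measurable.comp (measurable_from_top : Measurable g) (measurable_pi_apply i)
  · exact (PP_indep q hq).comp (fun _ => g) (fun _ => measurable_from_top)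
  · intro i ω
    rw [hX_def, hg_def]
    by_cases h : ω i <;> simp [h]
  · intro i
    have hset : {ω : Fin n → Bool | X i ω = 1} = (fun ω : Fin n → Bool => ω i) ⁻¹' {true} := by
      ext ω
      rw [hX_def, hg_def]
      by_cases h : ω i <;> simp [h]
    rw [hset, PP_eval, muB_true, hq_def, ENNReal.toReal_ofReal hp0]
  · rw [hrp_def]; field_simp
  -- the main bound
  set E : Set (Fin n → Bool) := {ω | μ + lam ≤ ∑ i, X i ω} with hE_def
  have hE : ∀ S : Finset (Fin n), S.card ∈ Finset.Ico k (k+m) → (FS S) ∈ E := by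
    intro S hS
    rw [Finset.mem_Ico] at hS
    have hsum : ∑ i, X i (FS S) = (S.card : ℝ) := by
      have hterm : ∀ i, X i (FS S) = if i ∈ S then (1:ℝ) else 0 := by
        intro i
        rw [hX_def, hg_def]
        by_cases h : i ∈ S <;> simp [FS, h]
      rw [Finset.sum_congr rfl (fun i _ => hterm i), Finset.sum_boole]
      have hfil : Finset.filter (fun i => i ∈ S) Finset.univ = S := by
        ext i; simp
      rw [hfil]
    rw [hE_def]
    simp only [Set.mem_setOf_eq]
    rw [hsum]
    have : (k:ℝ) ≤ (S.card : ℝ) := by exact_mod_cast hS.1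
    linarith
  have hWle := PP_tail q hq k m E hE
  have hPne : PP q hq n E ≠ ⊤ := measure_ne_top _ _
  have h1q : (1:ENNReal) - q = ENNReal.ofReal (1 - rp) := by
    rw [hq_def, ENNReal.ofReal_sub _ hp0, ENNReal.ofReal_one]
  have hterm_ne : ∀ j ∈ Finset.Ico k (k+m),
      (Nat.choose n j : ENNReal) * (q^j * (1-q)^(n-j)) ≠ ⊤ := by
    intro j _
    apply ENNReal.mul_ne_top (ENNReal.natCast_ne_top _)
    apply ENNReal.mul_ne_top
    · exact ENNReal.pow_ne_top (by rw [hq_def]; exact ENNReal.ofReal_ne_top)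
    · exact ENNReal.pow_ne_top (by rw [h1q]; exact ENNReal.ofReal_ne_top)
  have hW : (∑ j ∈ Finset.Ico k (k+m), (Nat.choose n j : ENNReal) * (q^j * (1-q)^(n-j))).toReal
      = ∑ j ∈ Finset.Ico k (k+m), (Nat.choose n j : ℝ) * (rp^j * (1-rp)^(n-j)) := by
    rw [ENNReal.toReal_sum hterm_ne]
    apply Finset.sum_congr rfl
    intro j _
    rw [ENNReal.toReal_mul, ENNReal.toReal_mul, ENNReal.toReal_pow, ENNReal.toReal_pow,
      ENNReal.toReal_natCast, hq_def, ENNReal.toReal_ofReal hp0, h1q,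
      ENNReal.toReal_ofReal (by linarith)]
  -- the real sum bound
  have hreal : Real.exp (-100 - lam ^ 2 / μ)
      ≤ ∑ j ∈ Finset.Ico k (k+m), (Nat.choose n j : ℝ) * (rp^j * (1-rp)^(n-j)) := by
    have hlow : ∀ j ∈ Finset.Ico k (k+m),
        Real.exp (-100 - lam^2/μ) / m ≤ (Nat.choose n j : ℝ) * (rp^j * (1-rp)^(n-j)) := by
      intro j hj
      rw [Finset.mem_Ico] at hj
      have hj_lb : μ + lam ≤ (j:ℝ) := by
        have : (k:ℝ) ≤ j := by exact_mod_cast hj.1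
        linarith
      have hj_ub : (j:ℝ) ≤ μ + lam + Real.sqrt μ + 1 := by
        have h1 : (j:ℝ) + 1 ≤ (k:ℝ) + m := by
          have : j + 1 ≤ k + m := hj.2
          exact_mod_cast this
        linarith
      have := per_term hμ hlam0 hlamμ hn_lb hn_ub hm_lb hm_ub hj_lb hj_ub
      rw [hrp_def]
      exact this
    have hsum := Finset.card_nsmul_le_sum _ _ _ hlow
    rw [Nat.card_Ico] at hsum
    have hcard : k + m - k = m := by omega
    rw [hcard, nsmul_eq_mul] at hsum
    have : (m:ℝ) * (Real.exp (-100 - lam^2/μ) / m) = Real.exp (-100 - lam^2/μ) := by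
      field_simp
    rw [this] at hsum
    exact le_of_eq_of_le (by ring_nf) hsum
  calc Real.exp (-100 - lam ^ 2 / μ)
      ≤ ∑ j ∈ Finset.Ico k (k+m), (Nat.choose n j : ℝ) * (rp^j * (1-rp)^(n-j)) := hreal
    _ = (∑ j ∈ Finset.Ico k (k+m), (Nat.choose n j : ENNReal) * (q^j * (1-q)^(n-j))).toReal := hW.symm
    _ ≤ (PP q hq n E).toReal := ENNReal.toReal_mono hPne hWle
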